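/- Let $\overline{X}, \overline{S} \in \mathbb{S}^n_+$ with $\langle \overline{X}, \overline{S}\rangle = 0$. Then the normal cone $\mathcal{N}_{\mathbb{S}^n_+}(\overline{S})$ is a polyhedral set if and only if $\mathrm{rank}(\overline{S}) \ge n - 1$. -/

import Mathlib

open Matrix

/-- A set of matrices is polyhedral if it is the intersection of finitely many closed
half-spaces (with respect to the trace inner product). -/
def IsPolyhedralSet {n : ℕ} (C : Set (Matrix (Fin n) (Fin n) ℝ)) : Prop :=
  ∃ (k : ℕ) (a : Fin k → Matrix (Fin n) (Fin n) ℝ) (b : Fin k → ℝ),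
    C = {H | ∀ i, Matrix.trace ((a i)ᵀ * H) ≤ b i}

/-- The normal cone (in the ambient space `𝕊ⁿ` of symmetric matrices) of a set `D` of
symmetric matrices at a point `x`. -/
def matNormalCone {n : ℕ} (D : Set (Matrix (Fin n) (Fin n) ℝ))
    (x : Matrix (Fin n) (Fin n) ℝ) : Set (Matrix (Fin n) (Fin n) ℝ) :=
  {H | H.IsSymm ∧ ∀ z ∈ D, Matrix.trace (Hᵀ * (z - x)) ≤ 0}

open Module

section Helpers

variable {n : ℕ}

open scoped MatrixOrder in
lemma posSemidef_iff_eq_transpose_mul_self {A : Matrix (Fin n) (Fin n) ℝ} :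
    A.PosSemidef ↔ ∃ B : Matrix (Fin n) (Fin n) ℝ, A = Bᴴ * B := by
  constructor
  · intro hA
    classical
    obtain ⟨X, hX, -, rfl⟩ :=
      CFC.exists_sqrt_of_isSelfAdjoint_of_quasispectrumRestricts hA.isHermitian
        (QuasispectrumRestricts.nnreal_of_nonneg hA.nonneg)
    refine ⟨X, ?_⟩
    have h1 : star X = X := hX.star_eq
    have h2 : Xᴴ = X := hX.star_eq
    rw [h2]
  · rintro ⟨B, rfl⟩
    exact posSemidef_conjTranspose_mul_self B

lemma psd_diag_nonneg {M : Matrix (Fin n) (Fin n) ℝ} (h : M.PosSemidef) (i : Fin n) :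
    0 ≤ M i i := by
  have := h.dotProduct_mulVec_nonneg (Pi.single i 1)
  simpa using this

lemma trace_ct_mul_self_nonneg (M : Matrix (Fin n) (Fin n) ℝ) :
    0 ≤ Matrix.trace (Mᴴ * M) := by
  simp only [Matrix.trace, Matrix.diag, Matrix.mul_apply, conjTranspose_apply, star_trivial]
  refine Finset.sum_nonneg fun j _ => Finset.sum_nonneg fun i _ => mul_self_nonneg _

lemma eq_zero_of_trace_ct_mul_self (M : Matrix (Fin n) (Fin n) ℝ)
    (h : Matrix.trace (Mᴴ * M) = 0) : M = 0 := by
  simp only [Matrix.trace, Matrix.diag, Matrix.mul_apply, conjTranspose_apply, star_trivial] at h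
  ext i j
  have h1 := (Finset.sum_eq_zero_iff_of_nonneg (fun j _ => Finset.sum_nonneg fun i _ => mul_self_nonneg (M i j))).mp h j (Finset.mem_univ j)
  have h2 := (Finset.sum_eq_zero_iff_of_nonneg (fun i _ => mul_self_nonneg (M i j))).mp h1 i (Finset.mem_univ i)
  have := mul_self_eq_zero.mp h2
  simpa using this

lemma trace_psd_mul_nonneg {A B : Matrix (Fin n) (Fin n) ℝ}
    (hA : A.PosSemidef) (hB : B.PosSemidef) : 0 ≤ Matrix.trace (A * B) := by
  obtain ⟨P, rfl⟩ := posSemidef_iff_eq_transpose_mul_self.mp hA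
  obtain ⟨Q, rfl⟩ := posSemidef_iff_eq_transpose_mul_self.mp hB
  have : Matrix.trace (Pᴴ * P * (Qᴴ * Q)) = Matrix.trace ((P * Qᴴ)ᴴ * (P * Qᴴ)) := by
    rw [conjTranspose_mul, conjTranspose_conjTranspose, Matrix.trace_mul_cycle]
    simp only [Matrix.mul_assoc]
    rw [Matrix.trace_mul_comm]
    simp only [Matrix.mul_assoc]
  rw [this]
  exact trace_ct_mul_self_nonneg _

lemma mul_eq_zero_of_trace_psd_mul {A B : Matrix (Fin n) (Fin n) ℝ}
    (hA : A.PosSemidef) (hB : B.PosSemidef) (h : Matrix.trace (A * B) = 0) : A * B = 0 := by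
  obtain ⟨P, rfl⟩ := posSemidef_iff_eq_transpose_mul_self.mp hA
  obtain ⟨Q, rfl⟩ := posSemidef_iff_eq_transpose_mul_self.mp hB
  have key : Matrix.trace (Pᴴ * P * (Qᴴ * Q)) = Matrix.trace ((P * Qᴴ)ᴴ * (P * Qᴴ)) := by
    rw [conjTranspose_mul, conjTranspose_conjTranspose, Matrix.trace_mul_cycle]
    simp only [Matrix.mul_assoc]
    rw [Matrix.trace_mul_comm]
    simp only [Matrix.mul_assoc]
  rw [key] at h
  have hz : P * Qᴴ = 0 := eq_zero_of_trace_ct_mul_self _ h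
  calc Pᴴ * P * (Qᴴ * Q) = Pᴴ * (P * Qᴴ) * Q := by rw [Matrix.mul_assoc, Matrix.mul_assoc, Matrix.mul_assoc]
    _ = 0 := by rw [hz, Matrix.mul_zero, Matrix.zero_mul]

lemma trace_tmul_vecMulVec (A : Matrix (Fin n) (Fin n) ℝ) (x y : Fin n → ℝ) :
    Matrix.trace (Aᵀ * vecMulVec x y) = x ⬝ᵥ (A *ᵥ y) := by
  simp only [Matrix.trace, Matrix.mul_apply, vecMulVec_apply, dotProduct, mulVec, Matrix.diag,
    transpose_apply, Finset.mul_sum]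
  rw [Finset.sum_comm]
  exact Finset.sum_congr rfl fun i _ => Finset.sum_congr rfl fun j _ => by ring

lemma trace_vecMulVec_tmul (A : Matrix (Fin n) (Fin n) ℝ) (x y : Fin n → ℝ) :
    Matrix.trace ((vecMulVec x y)ᵀ * A) = x ⬝ᵥ (A *ᵥ y) := by
  rw [← trace_tmul_vecMulVec A x y, ← Matrix.trace_transpose, transpose_mul,
    transpose_transpose, Matrix.trace_mul_comm]

lemma vecMulVec_posSemidef (x : Fin n → ℝ) : (vecMulVec x x).PosSemidef := by
  refine PosSemidef.of_dotProduct_mulVec_nonneg ?_ ?_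
  · ext i j
    simp [vecMulVec_apply, conjTranspose_apply, mul_comm]
  · intro y
    have : star y ⬝ᵥ (vecMulVec x x *ᵥ y) = (x ⬝ᵥ y) * (x ⬝ᵥ y) := by
      simp only [star_trivial, dotProduct, mulVec, vecMulVec_apply, Finset.mul_sum,
        Finset.sum_mul]
      exact Finset.sum_congr rfl fun i _ => Finset.sum_congr rfl fun j _ => by ring
    rw [this]
    exact mul_self_nonneg _


lemma trace_transpose_mul_of_symm {H A : Matrix (Fin n) (Fin n) ℝ} (h : H.IsSymm) :
    Matrix.trace (Hᵀ * A) = Matrix.trace (H * A) := by rw [h]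

lemma mem_normalCone_iff {S : Matrix (Fin n) (Fin n) ℝ} (hS : S.PosSemidef)
    (H : Matrix (Fin n) (Fin n) ℝ) :
    H ∈ matNormalCone {Y : Matrix (Fin n) (Fin n) ℝ | Y.PosSemidef} S ↔
      (-H).PosSemidef ∧ Matrix.trace (Hᵀ * S) = 0 := by
  constructor
  · rintro ⟨hsym, hle⟩
    have hsym' : Hᵀ = H := hsym
    have h0 : Matrix.trace (Hᵀ * S) = 0 := by
      have h1 := hle 0 Matrix.PosSemidef.zero
      have h2 := hle (S + S) (hS.add hS)
      simp only [zero_sub, add_sub_cancel_right, Matrix.mul_neg, trace_neg, neg_nonpos] at h1 h2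
      linarith
    refine ⟨PosSemidef.of_dotProduct_mulVec_nonneg ?_ ?_, h0⟩
    · show (-H)ᴴ = -H
      rw [conjTranspose_eq_transpose_of_trivial, transpose_neg, hsym']
    · intro x
      have hz := hle (S + vecMulVec x x) (hS.add (vecMulVec_posSemidef x))
      rw [add_sub_cancel_left, trace_tmul_vecMulVec] at hz
      rw [Matrix.neg_mulVec, dotProduct_neg, star_trivial]
      linarith
  · rintro ⟨hpsd, htr⟩
    have hsym : H.IsSymm := by
      show Hᵀ = H
      have h' : (-H)ᴴ = -H := hpsd.1
      rw [conjTranspose_eq_transpose_of_trivial, transpose_neg, neg_inj] at h'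
      exact h'
    refine ⟨hsym, fun z hz => ?_⟩
    have h1 : 0 ≤ Matrix.trace ((-H) * z) := trace_psd_mul_nonneg hpsd hz
    have h2 : Matrix.trace (Hᵀ * (z - S)) = Matrix.trace (Hᵀ * z) := by
      rw [Matrix.mul_sub, trace_sub, htr, sub_zero]
    rw [h2, trace_transpose_mul_of_symm hsym]
    have h3 : (-H) * z = -(H * z) := by rw [Matrix.neg_mul]
    rw [h3, trace_neg] at h1
    linarith

lemma isPolyhedral_of_fintype {C : Set (Matrix (Fin n) (Fin n) ℝ)}
    (ι : Type) [Fintype ι] (a : ι → Matrix (Fin n) (Fin n) ℝ) (b : ι → ℝ)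
    (h : C = {H | ∀ i, Matrix.trace ((a i)ᵀ * H) ≤ b i}) : IsPolyhedralSet C := by
  refine ⟨Fintype.card ι, a ∘ (Fintype.equivFin ι).symm, b ∘ (Fintype.equivFin ι).symm, ?_⟩
  rw [h]
  ext H
  constructor
  · intro hH i; exact hH _
  · intro hH i
    have := hH (Fintype.equivFin ι i)
    simpa using this

lemma eq_zero_of_forall_mulVec {A : Matrix (Fin n) (Fin n) ℝ}
    (h : ∀ x, A *ᵥ x = 0) : A = 0 := by
  ext i j
  have := congrFun (h (Pi.single j 1)) i
  simpa [mulVec_single] using this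

lemma finrank_ker_eq (S : Matrix (Fin n) (Fin n) ℝ) :
    finrank ℝ (LinearMap.ker S.mulVecLin) = n - S.rank := by
  have h := LinearMap.finrank_range_add_finrank_ker S.mulVecLin
  rw [Module.finrank_pi] at h
  simp only [Fintype.card_fin] at h
  have : S.rank = finrank ℝ (LinearMap.range S.mulVecLin) := rfl
  omega


-- from a member of the normal cone: S * (-H) = 0
lemma smulH_eq_zero {S H : Matrix (Fin n) (Fin n) ℝ} (hS : S.PosSemidef)
    (hpsd : (-H).PosSemidef) (htr : Matrix.trace (Hᵀ * S) = 0) :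
    S * (-H) = 0 := by
  have hsymH : Hᵀ = H := by
    have h' : (-H)ᴴ = -H := hpsd.1
    rw [conjTranspose_eq_transpose_of_trivial, transpose_neg, neg_inj] at h'
    exact h'
  have htr' : Matrix.trace ((-H) * S) = 0 := by
    rw [Matrix.neg_mul, trace_neg, neg_eq_zero, ← hsymH]
    exact htr
  have hz : (-H) * S = 0 := mul_eq_zero_of_trace_psd_mul hpsd hS htr'
  have : ((-H) * S)ᵀ = 0 := by rw [hz]; simp
  rw [transpose_mul] at this
  have hsymS : Sᵀ = S := by
    have h' : Sᴴ = S := hS.1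
    rwa [conjTranspose_eq_transpose_of_trivial] at h'
  rw [hsymS] at this
  rw [transpose_neg, hsymH] at this
  exact this

lemma dot_vecMulVec_mulVec (x a b y : Fin n → ℝ) :
    x ⬝ᵥ (vecMulVec a b *ᵥ y) = (x ⬝ᵥ a) * (b ⬝ᵥ y) := by
  simp only [dotProduct, vecMulVec_apply, mulVec, Finset.mul_sum, Finset.sum_mul]
  rw [Finset.sum_comm]
  exact Finset.sum_congr rfl fun i _ => Finset.sum_congr rfl fun j _ => by ring

lemma dotProduct_self_pos {x : Fin n → ℝ} (hx : x ≠ 0) : 0 < x ⬝ᵥ x := by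
  rcases (Finset.sum_nonneg fun i _ => mul_self_nonneg (x i)).lt_or_eq with h | h
  · exact h
  · exact absurd (dotProduct_self_eq_zero.mp h.symm) hx

lemma posSemidef_smul {t : ℝ} {M : Matrix (Fin n) (Fin n) ℝ} (hM : M.PosSemidef) (ht : 0 ≤ t) :
    (t • M).PosSemidef := by
  refine PosSemidef.of_dotProduct_mulVec_nonneg ?_ (fun x => ?_)
  · show (t • M)ᴴ = t • M
    rw [conjTranspose_smul, hM.1]
    simp
  · rw [smul_mulVec, dotProduct_smul]
    exact mul_nonneg ht (hM.dotProduct_mulVec_nonneg x)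

lemma ray_classification {S : Matrix (Fin n) (Fin n) ℝ} (hS : S.PosSemidef)
    (v0 : Fin n → ℝ) (hv0 : v0 ≠ 0) (hv0K : S *ᵥ v0 = 0)
    (hker : ∀ x, S *ᵥ x = 0 → ∃ c : ℝ, x = c • v0)
    (H : Matrix (Fin n) (Fin n) ℝ) :
    ((-H).PosSemidef ∧ Matrix.trace (Hᵀ * S) = 0) ↔
      ∃ t : ℝ, 0 ≤ t ∧ H = -(t • vecMulVec v0 v0) := by
  constructor
  · rintro ⟨hpsd, htr⟩
    have hSA : S * (-H) = 0 := smulH_eq_zero hS hpsd htr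
    have hcol : ∀ x, ∃ c : ℝ, (-H) *ᵥ x = c • v0 := by
      intro x
      apply hker
      rw [mulVec_mulVec, hSA, zero_mulVec]
    choose c hc using fun j => hcol (Pi.single j 1)
    have hA : ∀ i j, (-H) i j = c j * v0 i := by
      intro i j
      have := congrFun (hc j) i
      simpa [mulVec_single] using this
    obtain ⟨i0, hi0⟩ := Function.ne_iff.mp hv0
    have hi0' : v0 i0 ≠ 0 := by simpa using hi0
    have hsym : ∀ i j, (-H) i j = (-H) j i := by
      intro i j
      have h' : (-H)ᴴ = -H := hpsd.1
      rw [conjTranspose_eq_transpose_of_trivial] at h'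
      conv_lhs => rw [← h']
      rfl
    set s : ℝ := c i0 / v0 i0 with hs
    have hcs : ∀ j, c j = s * v0 j := by
      intro j
      have h1 : c j * v0 i0 = c i0 * v0 j := by
        rw [← hA i0 j, hsym i0 j, hA j i0]
      rw [hs]
      field_simp
      linarith [h1]
    have hAeq : (-H) = s • vecMulVec v0 v0 := by
      ext i j
      simp only [Matrix.smul_apply, vecMulVec_apply, smul_eq_mul]
      rw [hA i j, hcs j]
      ring
    have hspos : 0 ≤ s := by
      have hq := hpsd.dotProduct_mulVec_nonneg v0
      rw [hAeq, smul_mulVec, dotProduct_smul, star_trivial, smul_eq_mul,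
        dot_vecMulVec_mulVec] at hq
      have hpos := dotProduct_self_pos hv0
      exact (mul_nonneg_iff_of_pos_right (mul_pos hpos hpos)).mp hq
    exact ⟨s, hspos, by rw [← hAeq, neg_neg]⟩
  · rintro ⟨t, ht, rfl⟩
    constructor
    · rw [neg_neg]
      exact posSemidef_smul (vecMulVec_posSemidef v0) ht
    · rw [transpose_neg, Matrix.neg_mul, trace_neg, neg_eq_zero, transpose_smul,
        Matrix.smul_mul, trace_smul]
      rw [trace_vecMulVec_tmul, hv0K]
      simp

lemma zero_classification {S : Matrix (Fin n) (Fin n) ℝ} (hS : S.PosSemidef)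
    (hker : ∀ x, S *ᵥ x = 0 → x = 0)
    (H : Matrix (Fin n) (Fin n) ℝ) :
    ((-H).PosSemidef ∧ Matrix.trace (Hᵀ * S) = 0) ↔ H = 0 := by
  constructor
  · rintro ⟨hpsd, htr⟩
    have hSA : S * (-H) = 0 := smulH_eq_zero hS hpsd htr
    have : ∀ x, (-H) *ᵥ x = 0 := by
      intro x
      apply hker
      rw [mulVec_mulVec, hSA, zero_mulVec]
    have hA : (-H) = 0 := by
      ext i j
      have := congrFun (this (Pi.single j 1)) i
      simpa [mulVec_single] using this
    simpa [neg_eq_zero] using hA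
  · rintro rfl
    refine ⟨by simpa using Matrix.PosSemidef.zero, by simp⟩

lemma trace_stdBasis (p q : Fin n) (H : Matrix (Fin n) (Fin n) ℝ) :
    Matrix.trace ((Matrix.single p q 1)ᵀ * H) = H p q := by
  simp only [Matrix.trace, Matrix.mul_apply, Matrix.single, Matrix.diag, transpose_apply, of_apply]
  rw [Finset.sum_comm]
  simp [ite_and, Finset.sum_ite_eq]

lemma ip_neg_left (A H : Matrix (Fin n) (Fin n) ℝ) :
    Matrix.trace ((-A)ᵀ * H) = -Matrix.trace (Aᵀ * H) := by
  rw [transpose_neg, Matrix.neg_mul, trace_neg]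

lemma ip_sub_smul (A D H : Matrix (Fin n) (Fin n) ℝ) (r : ℝ) :
    Matrix.trace ((A - r • D)ᵀ * H) =
      Matrix.trace (Aᵀ * H) - r * Matrix.trace (Dᵀ * H) := by
  rw [transpose_sub, Matrix.sub_mul, trace_sub, transpose_smul, Matrix.smul_mul, trace_smul,
    smul_eq_mul]

lemma ip_self_pos {D : Matrix (Fin n) (Fin n) ℝ} (hD : D ≠ 0) :
    0 < Matrix.trace (Dᵀ * D) := by
  have h1 : 0 ≤ Matrix.trace (Dᵀ * D) := by
    simp only [Matrix.trace, Matrix.diag, Matrix.mul_apply, transpose_apply]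
    exact Finset.sum_nonneg fun j _ => Finset.sum_nonneg fun i _ => mul_self_nonneg _
  rcases h1.lt_or_eq with h | h
  · exact h
  · exfalso
    apply hD
    have h' : Matrix.trace (Dᴴ * D) = 0 := by
      rw [conjTranspose_eq_transpose_of_trivial]; exact h.symm
    -- inline proof that trace (Dᴴ D) = 0 → D = 0
    simp only [Matrix.trace, Matrix.diag, Matrix.mul_apply, conjTranspose_apply,
      star_trivial] at h'
    ext i j
    have h1 := (Finset.sum_eq_zero_iff_of_nonneg
      (fun j _ => Finset.sum_nonneg fun i _ => mul_self_nonneg (D i j))).mp h' j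
      (Finset.mem_univ j)
    have h2 := (Finset.sum_eq_zero_iff_of_nonneg
      (fun i _ => mul_self_nonneg (D i j))).mp h1 i (Finset.mem_univ i)
    simpa using mul_self_eq_zero.mp h2

lemma ip_smul_right (D H : Matrix (Fin n) (Fin n) ℝ) (t : ℝ) :
    Matrix.trace (Dᵀ * (t • H)) = t * Matrix.trace (Dᵀ * H) := by
  rw [Matrix.mul_smul, trace_smul, smul_eq_mul]

lemma ip_neg_right (D H : Matrix (Fin n) (Fin n) ℝ) :
    Matrix.trace (Dᵀ * (-H)) = -Matrix.trace (Dᵀ * H) := by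
  rw [Matrix.mul_neg, trace_neg]

lemma ray_polyhedral (D : Matrix (Fin n) (Fin n) ℝ) (hD : D ≠ 0) :
    IsPolyhedralSet {H : Matrix (Fin n) (Fin n) ℝ | ∃ t : ℝ, 0 ≤ t ∧ H = -(t • D)} := by
  set cD := Matrix.trace (Dᵀ * D) with hcD
  have hcpos : 0 < cD := ip_self_pos hD
  refine isPolyhedral_of_fintype ((Fin n × Fin n × Bool) ⊕ Unit)
    (fun i => match i with
      | Sum.inl (p, q, true) => Matrix.single p q 1 - (D p q / cD) • D
      | Sum.inl (p, q, false) => -(Matrix.single p q 1 - (D p q / cD) • D)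
      | Sum.inr _ => D)
    (fun _ => 0) ?_
  ext H
  simp only [Set.mem_setOf_eq]
  constructor
  · rintro ⟨t, ht, rfl⟩ i
    match i with
    | Sum.inl (p, q, true) =>
      refine le_of_eq ?_
      rw [ip_sub_smul, ip_neg_right, ip_neg_right, ip_smul_right, ip_smul_right, trace_stdBasis]
      simp only [Matrix.neg_apply, Matrix.smul_apply, smul_eq_mul, ← hcD]
      field_simp
      ring
    | Sum.inl (p, q, false) =>
      refine le_of_eq ?_
      rw [ip_neg_left, ip_sub_smul, ip_neg_right, ip_neg_right, ip_smul_right, ip_smul_right,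
        trace_stdBasis]
      simp only [Matrix.neg_apply, Matrix.smul_apply, smul_eq_mul, ← hcD]
      field_simp
      ring
    | Sum.inr _ =>
      rw [ip_neg_right, ip_smul_right, ← hcD]
      simp only [neg_nonpos]
      exact mul_nonneg ht hcpos.le
  · intro hH
    refine ⟨-(Matrix.trace (Dᵀ * H)) / cD, ?_, ?_⟩
    · have := hH (Sum.inr ())
      simp only at this
      exact div_nonneg (neg_nonneg.mpr this) hcpos.le
    · ext p q
      have h1 := hH (Sum.inl (p, q, true))
      have h2 := hH (Sum.inl (p, q, false))
      rw [ip_sub_smul, trace_stdBasis] at h1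
      rw [ip_neg_left, ip_sub_smul, trace_stdBasis] at h2
      have heq : H p q = D p q / cD * Matrix.trace (Dᵀ * H) := by linarith
      simp only [Matrix.neg_apply, Matrix.smul_apply, smul_eq_mul]
      rw [heq]
      field_simp

lemma zero_polyhedral : IsPolyhedralSet {H : Matrix (Fin n) (Fin n) ℝ | H = 0} := by
  refine isPolyhedral_of_fintype (Fin n × Fin n × Bool)
    (fun i => match i with
      | (p, q, true) => Matrix.single p q 1
      | (p, q, false) => -Matrix.single p q 1)
    (fun _ => 0) ?_
  ext H
  simp only [Set.mem_setOf_eq]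
  constructor
  · rintro rfl i
    match i with
    | (p, q, true) => rw [trace_stdBasis]; simp
    | (p, q, false) => rw [ip_neg_left, trace_stdBasis]; simp
  · intro hH
    ext p q
    have h1 := hH (p, q, true)
    have h2 := hH (p, q, false)
    rw [trace_stdBasis] at h1
    rw [ip_neg_left, trace_stdBasis] at h2
    simp only [Matrix.zero_apply]
    linarith

lemma exists_orthonormal_pair {S : Matrix (Fin n) (Fin n) ℝ}
    (h2 : 2 ≤ finrank ℝ (LinearMap.ker S.mulVecLin)) :
    ∃ u w : Fin n → ℝ, S *ᵥ u = 0 ∧ S *ᵥ w = 0 ∧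
      u ⬝ᵥ u = 1 ∧ w ⬝ᵥ w = 1 ∧ u ⬝ᵥ w = 0 := by
  classical
  let e : EuclideanSpace ℝ (Fin n) ≃ₗ[ℝ] (Fin n → ℝ) := WithLp.linearEquiv 2 ℝ (Fin n → ℝ)
  let K : Submodule ℝ (EuclideanSpace ℝ (Fin n)) :=
    (LinearMap.ker S.mulVecLin).comap (e : EuclideanSpace ℝ (Fin n) →ₗ[ℝ] (Fin n → ℝ))
  have hKrank : 2 ≤ finrank ℝ K := by
    have hKeq : K = (LinearMap.ker S.mulVecLin).map (e.symm : (Fin n → ℝ) →ₗ[ℝ] _) := by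
      rw [Submodule.map_equiv_eq_comap_symm]
      simp
      rfl
    rw [hKeq, LinearEquiv.finrank_map_eq]
    exact h2
  let B := stdOrthonormalBasis ℝ K
  let i0 : Fin (finrank ℝ K) := ⟨0, by omega⟩
  let i1 : Fin (finrank ℝ K) := ⟨1, by omega⟩
  have hip : ∀ x y : EuclideanSpace ℝ (Fin n), (inner ℝ x y : ℝ) = e x ⬝ᵥ e y := by
    intro x y
    rw [PiLp.inner_apply]
    simp [dotProduct, RCLike.inner_apply, conj_trivial]
    exact Finset.sum_congr rfl fun i _ => mul_comm _ _
  have hmem : ∀ i : Fin (finrank ℝ K), S *ᵥ e (B i : EuclideanSpace ℝ (Fin n)) = 0 := by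
    intro i
    have hm : (B i : EuclideanSpace ℝ (Fin n)) ∈ K := (B i).2
    rw [Submodule.mem_comap, LinearMap.mem_ker, mulVecLin_apply] at hm
    exact hm
  have hnorm : ∀ i : Fin (finrank ℝ K),
      e (B i : EuclideanSpace ℝ (Fin n)) ⬝ᵥ e (B i : EuclideanSpace ℝ (Fin n)) = 1 := by
    intro i
    rw [← hip]
    have h1 : (inner ℝ (B i) (B i) : ℝ) = 1 := by
      have := B.orthonormal.1 i
      rw [real_inner_self_eq_norm_mul_norm, this, mul_one]
    rw [← h1]
    exact (Submodule.coe_inner K (B i) (B i)).symm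
  have horth : e (B i0 : EuclideanSpace ℝ (Fin n)) ⬝ᵥ e (B i1 : EuclideanSpace ℝ (Fin n)) = 0 := by
    rw [← hip]
    have h1 : (inner ℝ (B i0) (B i1) : ℝ) = 0 := B.orthonormal.2 (by simp [i0, i1])
    rw [← h1]
    exact (Submodule.coe_inner K (B i0) (B i1)).symm
  exact ⟨_, _, hmem i0, hmem i1, hnorm i0, hnorm i1, horth⟩

lemma ip_add_right (D X Y : Matrix (Fin n) (Fin n) ℝ) :
    Matrix.trace (Dᵀ * (X + Y)) = Matrix.trace (Dᵀ * X) + Matrix.trace (Dᵀ * Y) := by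
  rw [Matrix.mul_add, trace_add]

lemma ip_sub_right (D X Y : Matrix (Fin n) (Fin n) ℝ) :
    Matrix.trace (Dᵀ * (X - Y)) = Matrix.trace (Dᵀ * X) - Matrix.trace (Dᵀ * Y) := by
  rw [Matrix.mul_sub, trace_sub]

lemma quad_zero {P Q R x y z : ℝ} (hxy : x < y) (hyz : y < z)
    (h1 : P + Q * x + R * (x * x) = 0) (h2 : P + Q * y + R * (y * y) = 0)
    (h3 : P + Q * z + R * (z * z) = 0) : P = 0 ∧ Q = 0 ∧ R = 0 := by
  have e1 : (y - x) * (Q + R * (x + y)) = 0 := by linear_combination h2 - h1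
  have e2 : (z - y) * (Q + R * (y + z)) = 0 := by linear_combination h3 - h2
  have f1 : Q + R * (x + y) = 0 := by
    rcases mul_eq_zero.mp e1 with h | h
    · linarith
    · exact h
  have f2 : Q + R * (y + z) = 0 := by
    rcases mul_eq_zero.mp e2 with h | h
    · linarith
    · exact h
  have hRz : R * (z - x) = 0 := by linear_combination f2 - f1
  have hR0 : R = 0 := by
    rcases mul_eq_zero.mp hRz with h | h
    · exact h
    · exfalso; linarith
  have hQ0 : Q = 0 := by
    rw [hR0] at f1
    linarith
  have hP0 : P = 0 := by
    rw [hR0, hQ0] at h1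
    linarith
  exact ⟨hP0, hQ0, hR0⟩

lemma not_polyhedral_of_pair {S : Matrix (Fin n) (Fin n) ℝ} (hS : S.PosSemidef)
    (u w : Fin n → ℝ) (hu : S *ᵥ u = 0) (hw : S *ᵥ w = 0)
    (huu : u ⬝ᵥ u = 1) (hww : w ⬝ᵥ w = 1) (huw : u ⬝ᵥ w = 0) :
    ¬ IsPolyhedralSet (matNormalCone {Y : Matrix (Fin n) (Fin n) ℝ | Y.PosSemidef} S) := by
  classical
  rintro ⟨k, a, b, hrep⟩
  set N := matNormalCone {Y : Matrix (Fin n) (Fin n) ℝ | Y.PosSemidef} S with hN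
  -- basic vectors and matrices
  set zv : ℝ → (Fin n → ℝ) := fun t => u + t • w with hzv
  set wv : ℝ → (Fin n → ℝ) := fun t => t • u - w with hwv
  have hwu : w ⬝ᵥ u = 0 := by rw [dotProduct_comm]; exact huw
  have hSz : ∀ t, S *ᵥ zv t = 0 := by
    intro t
    rw [hzv]
    simp only [mulVec_add, mulVec_smul, hu, hw]
    simp
  have hzw : ∀ t, zv t ⬝ᵥ wv t = 0 := by
    intro t
    simp only [hzv, hwv, dotProduct_sub, dotProduct_smul, add_dotProduct, smul_dotProduct,
      smul_eq_mul, huu, hww, huw, hwu]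
    ring
  have hwvwv : ∀ t, wv t ⬝ᵥ wv t = t * t + 1 := by
    intro t
    simp only [hwv, dotProduct_sub, dotProduct_smul, sub_dotProduct, smul_dotProduct,
      smul_eq_mul, huu, hww, huw, hwu]
    ring
  set M : ℝ → Matrix (Fin n) (Fin n) ℝ := fun t => vecMulVec (zv t) (zv t) with hM
  set W : ℝ → Matrix (Fin n) (Fin n) ℝ := fun t => vecMulVec (wv t) (wv t) with hW
  -- membership of -(M t) in N
  have hmem : ∀ t, -(M t) ∈ N := by
    intro t
    rw [mem_normalCone_iff hS]
    refine ⟨by rw [neg_neg]; exact vecMulVec_posSemidef _, ?_⟩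
    rw [transpose_neg, Matrix.neg_mul, trace_neg, neg_eq_zero, trace_vecMulVec_tmul, hSz,
      dotProduct_zero]
  have hmemsmul : ∀ t (s : ℝ), 0 ≤ s → s • (-(M t)) ∈ N := by
    intro t s hs
    rw [mem_normalCone_iff hS]
    constructor
    · rw [← smul_neg, neg_neg]
      exact posSemidef_smul (vecMulVec_posSemidef _) hs
    · rw [transpose_smul, Matrix.smul_mul, trace_smul, smul_eq_mul, transpose_neg,
        Matrix.neg_mul, trace_neg, trace_vecMulVec_tmul, hSz, dotProduct_zero]
      ring
  -- non-membership
  have hnotmem : ∀ t (ε : ℝ), 0 < ε → -(M t) + ε • W t ∉ N := by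
    intro t ε hε hmemx
    rw [mem_normalCone_iff hS] at hmemx
    have hq := hmemx.1.dotProduct_mulVec_nonneg (wv t)
    rw [neg_add, neg_neg, ← sub_eq_add_neg] at hq
    rw [sub_mulVec, dotProduct_sub, smul_mulVec, dotProduct_smul,
      dot_vecMulVec_mulVec, dot_vecMulVec_mulVec] at hq
    rw [star_trivial, dotProduct_comm (wv t) (zv t)] at hq
    rw [hzw, hwvwv] at hq
    simp only [smul_eq_mul] at hq
    nlinarith [mul_pos hε (show (0:ℝ) < (t * t + 1) * (t * t + 1) by nlinarith [mul_self_nonneg t])]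
  -- quantities
  set g : Fin k → ℝ → ℝ := fun i t => Matrix.trace ((a i)ᵀ * (-(M t))) with hg
  set h : Fin k → ℝ → ℝ := fun i t => Matrix.trace ((a i)ᵀ * W t) with hh
  have hgdef : ∀ i t, Matrix.trace ((a i)ᵀ * (-(M t))) = g i t := fun _ _ => rfl
  have hhdef : ∀ i t, Matrix.trace ((a i)ᵀ * W t) = h i t := fun _ _ => rfl
  have hb : ∀ i, 0 ≤ b i := by
    intro i
    have h0 : (0 : Matrix (Fin n) (Fin n) ℝ) ∈ N := by
      rw [mem_normalCone_iff hS]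
      exact ⟨by simpa using Matrix.PosSemidef.zero, by simp⟩
    rw [hrep] at h0
    simpa using h0 i
  have hgle : ∀ i t, g i t ≤ 0 := by
    intro i t
    by_contra hpos
    push_neg at hpos
    have hs : 0 ≤ (b i + 1) / g i t := le_of_lt (div_pos (by linarith [hb i]) hpos)
    have hmm := hmemsmul t _ hs
    rw [hrep] at hmm
    have h2 := hmm i
    rw [ip_smul_right, hgdef, div_mul_cancel₀ _ (ne_of_gt hpos)] at h2
    linarith
  -- key claim
  have hclaim : ∀ t : ℝ, ∃ i, g i t = 0 ∧ 0 < h i t := by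
    intro t
    by_contra hcon
    push_neg at hcon
    -- for every i : g i t < 0 or h i t ≤ 0
    have halt : ∀ i, g i t < 0 ∨ h i t ≤ 0 := by
      intro i
      rcases lt_or_eq_of_le (hgle i t) with h1 | h1
      · exact Or.inl h1
      · exact Or.inr (hcon i h1)
    set F : Finset (Fin k) := Finset.univ.filter (fun i => 0 < h i t) with hF
    set ε : ℝ := if hFne : F.Nonempty then min 1 (F.inf' hFne (fun i => -g i t / h i t)) else 1
      with hε
    have hεpos : 0 < ε := by
      rw [hε]
      split
      · next hFne =>
        apply lt_min
        · norm_num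
        · rw [Finset.lt_inf'_iff]
          intro i hi
          rw [hF, Finset.mem_filter] at hi
          have hhi : 0 < h i t := hi.2
          have hgi : g i t < 0 := by
            rcases halt i with h1 | h1
            · exact h1
            · linarith
          exact div_pos (by linarith) hhi
      · norm_num
    have hεunder : ∀ i, 0 < h i t → ε * h i t ≤ -g i t := by
      intro i hi
      have hFne : F.Nonempty := ⟨i, by rw [hF, Finset.mem_filter]; exact ⟨Finset.mem_univ i, hi⟩⟩
      have hεle : ε ≤ -g i t / h i t := by
        rw [hε, dif_pos hFne]
        refine (min_le_right _ _).trans ?_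
        exact Finset.inf'_le _ (by rw [hF, Finset.mem_filter]; exact ⟨Finset.mem_univ i, hi⟩)
      calc ε * h i t ≤ (-g i t / h i t) * h i t := by
            exact mul_le_mul_of_nonneg_right hεle hi.le
        _ = -g i t := by field_simp
    have hmem2 : -(M t) + ε • W t ∈ N := by
      rw [hrep]
      intro i
      rw [ip_add_right, ip_smul_right, hgdef, hhdef]
      rcases le_or_gt (h i t) 0 with h1 | h1
      · have : ε * h i t ≤ 0 := mul_nonpos_of_nonneg_of_nonpos hεpos.le h1
        have := hgle i t
        have := hb i
        linarith
      · have := hεunder i h1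
        have := hb i
        linarith
    exact hnotmem t ε hεpos hmem2
  -- the polynomial structure
  have hk : k ≠ 0 := by
    intro hk0
    obtain ⟨i, _⟩ := hclaim 0
    have := i.isLt
    omega
  -- coefficients
  set P : Fin k → ℝ := fun i => Matrix.trace ((a i)ᵀ * vecMulVec u u) with hP
  set Q : Fin k → ℝ := fun i =>
    Matrix.trace ((a i)ᵀ * (vecMulVec u w + vecMulVec w u)) with hQ
  set R : Fin k → ℝ := fun i => Matrix.trace ((a i)ᵀ * vecMulVec w w) with hR
  have hPdef : ∀ i, Matrix.trace ((a i)ᵀ * vecMulVec u u) = P i := fun _ => rfl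
  have hQdef : ∀ i, Matrix.trace ((a i)ᵀ * (vecMulVec u w + vecMulVec w u)) = Q i := fun _ => rfl
  have hRdef : ∀ i, Matrix.trace ((a i)ᵀ * vecMulVec w w) = R i := fun _ => rfl
  have hMexp : ∀ t, M t = vecMulVec u u + t • (vecMulVec u w + vecMulVec w u) +
      (t * t) • vecMulVec w w := by
    intro t
    ext i j
    simp only [hM, hzv, vecMulVec_apply, Matrix.add_apply, Matrix.smul_apply, Pi.add_apply, Pi.smul_apply,
      smul_eq_mul]
    ring
  have hWexp : ∀ t, W t = (t * t) • vecMulVec u u - t • (vecMulVec u w + vecMulVec w u) +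
      vecMulVec w w := by
    intro t
    ext i j
    simp only [hW, hwv, vecMulVec_apply, Matrix.add_apply, Matrix.sub_apply, Matrix.smul_apply, Pi.sub_apply,
      Pi.smul_apply, smul_eq_mul]
    ring
  have hgpoly : ∀ i t, g i t = -(P i + Q i * t + R i * (t * t)) := by
    intro i t
    rw [← hgdef]
    rw [ip_neg_right, hMexp, ip_add_right, ip_add_right, ip_smul_right, ip_smul_right]
    rw [hPdef, hQdef, hRdef]
    ring
  have hhpoly : ∀ i t, h i t = P i * (t * t) - Q i * t + R i := by
    intro i t
    rw [← hhdef]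
    rw [hWexp, ip_add_right, ip_sub_right, ip_smul_right, ip_smul_right]
    rw [hPdef, hQdef, hRdef]
    ring
  -- pigeonhole
  have hwit : ∀ m : ℕ, ∃ i, g i (m : ℝ) = 0 ∧ 0 < h i (m : ℝ) := fun m => hclaim m
  choose f hf using hwit
  obtain ⟨i, hinf⟩ := Finite.exists_infinite_fiber f
  have hsetinf : (f ⁻¹' {i}).Infinite := Set.infinite_coe_iff.mp hinf
  obtain ⟨m1, hm1⟩ := hsetinf.nonempty
  obtain ⟨m2, hm2, hm12⟩ := hsetinf.exists_gt m1
  obtain ⟨m3, hm3, hm23⟩ := hsetinf.exists_gt m2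
  have hkey : ∀ m : ℕ, m ∈ f ⁻¹' {i} → g i (m : ℝ) = 0 ∧ 0 < h i (m : ℝ) := by
    intro m hm
    rw [Set.mem_preimage, Set.mem_singleton_iff] at hm
    rw [← hm]
    exact hf m
  have k1 := hkey m1 hm1
  have k2 := hkey m2 hm2
  have k3 := hkey m3 hm3
  have c12 : (m1 : ℝ) < (m2 : ℝ) := by exact_mod_cast hm12
  have c23 : (m2 : ℝ) < (m3 : ℝ) := by exact_mod_cast hm23
  have e1 : P i + Q i * (m1 : ℝ) + R i * ((m1 : ℝ) * (m1 : ℝ)) = 0 := by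
    have := k1.1; rw [hgpoly] at this; linarith
  have e2 : P i + Q i * (m2 : ℝ) + R i * ((m2 : ℝ) * (m2 : ℝ)) = 0 := by
    have := k2.1; rw [hgpoly] at this; linarith
  have e3 : P i + Q i * (m3 : ℝ) + R i * ((m3 : ℝ) * (m3 : ℝ)) = 0 := by
    have := k3.1; rw [hgpoly] at this; linarith
  obtain ⟨hP0, hQ0, hR0⟩ := quad_zero c12 c23 e1 e2 e3
  have := k1.2
  rw [hhpoly, hP0, hQ0, hR0] at this
  linarith

end Helpers

theorem stmt4 {n : ℕ} (X S : Matrix (Fin n) (Fin n) ℝ)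
    (hX : X.PosSemidef) (hS : S.PosSemidef)
    (hXS : Matrix.trace (Xᵀ * S) = 0) :
    IsPolyhedralSet (matNormalCone {Y : Matrix (Fin n) (Fin n) ℝ | Y.PosSemidef} S) ↔
      n - 1 ≤ S.rank := by
  have hrle : S.rank ≤ n := S.rank_le_width
  have hkerrk := finrank_ker_eq S
  constructor
  · intro hpoly
    by_contra hrk
    push_neg at hrk
    have h2 : 2 ≤ finrank ℝ (LinearMap.ker S.mulVecLin) := by omega
    obtain ⟨u, w, hu, hw, huu, hww, huw⟩ := exists_orthonormal_pair h2
    exact not_polyhedral_of_pair hS u w hu hw huu hww huw hpoly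
  · intro hrk
    by_cases hr : S.rank = n
    · -- full rank: the normal cone is {0}
      have hker0 : finrank ℝ (LinearMap.ker S.mulVecLin) = 0 := by omega
      have hbot : LinearMap.ker S.mulVecLin = ⊥ := Submodule.finrank_eq_zero.mp hker0
      have hker : ∀ x, S *ᵥ x = 0 → x = 0 := by
        intro x hx
        have hxm : x ∈ LinearMap.ker S.mulVecLin := by
          rw [LinearMap.mem_ker, mulVecLin_apply]; exact hx
        rw [hbot, Submodule.mem_bot] at hxm
        exact hxm
      have hNeq : matNormalCone {Y : Matrix (Fin n) (Fin n) ℝ | Y.PosSemidef} S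
          = {H : Matrix (Fin n) (Fin n) ℝ | H = 0} := by
        ext H
        rw [Set.mem_setOf_eq, ← zero_classification hS hker H]
        exact mem_normalCone_iff hS H
      rw [hNeq]
      exact zero_polyhedral
    · -- rank n-1 : the normal cone is a ray
      have hker1 : finrank ℝ (LinearMap.ker S.mulVecLin) = 1 := by omega
      obtain ⟨v, hv, hspan⟩ := finrank_eq_one_iff'.mp hker1
      set v0 : Fin n → ℝ := (v : Fin n → ℝ) with hv0def
      have hv0 : v0 ≠ 0 := by
        rw [hv0def]
        simpa [Submodule.coe_eq_zero] using hv
      have hv0K : S *ᵥ v0 = 0 := by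
        have := v.2
        rw [LinearMap.mem_ker, mulVecLin_apply] at this
        exact this
      have hker : ∀ x, S *ᵥ x = 0 → ∃ c : ℝ, x = c • v0 := by
        intro x hx
        have hxm : x ∈ LinearMap.ker S.mulVecLin := by
          rw [LinearMap.mem_ker, mulVecLin_apply]; exact hx
        obtain ⟨c, hc⟩ := hspan ⟨x, hxm⟩
        refine ⟨c, ?_⟩
        have := congrArg (Subtype.val) hc
        simp only [Submodule.coe_smul] at this
        exact this.symm
      have hD : vecMulVec v0 v0 ≠ 0 := by
        intro hD0
        apply hv0
        funext i
        have := congrFun (congrFun hD0 i) i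
        rw [vecMulVec_apply] at this
        simpa using mul_self_eq_zero.mp this
      have hNeq : matNormalCone {Y : Matrix (Fin n) (Fin n) ℝ | Y.PosSemidef} S
          = {H : Matrix (Fin n) (Fin n) ℝ | ∃ t : ℝ, 0 ≤ t ∧ H = -(t • vecMulVec v0 v0)} := by
        ext H
        rw [Set.mem_setOf_eq, ← ray_classification hS v0 hv0 hv0K hker H]
        exact mem_normalCone_iff hS H
      rw [hNeq]
      exact ray_polyhedral _ hD
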